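/- A rational function g ∈ ℂ(t) has a rational antiderivative if and only if for every β ∈ ℂ the residue of g at β is zero. -/

import Mathlib

/-- A rational function `g ∈ ℂ(t)` has a rational antiderivative if it can be written as
`(a′b − ab′)/b²` for polynomials `a, b` with `b ≠ 0`; equivalently, it is the derivative
of the rational function `a/b`. -/
def HasRatAntideriv (g : RatFunc ℂ) : Prop :=
  ∃ a b : Polynomial ℂ, b ≠ 0 ∧
    g = algebraMap (Polynomial ℂ) (RatFunc ℂ) (Polynomial.derivative a * b - a * Polynomial.derivative b) /
        algebraMap (Polynomial ℂ) (RatFunc ℂ) (b ^ 2)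

/-- The residue of a rational function `g` at `β ∈ ℂ`: the coefficient of `(t − β)⁻¹` in the
Laurent expansion of `g` at `β`. -/
noncomputable def ratResidue (g : RatFunc ℂ) (β : ℂ) : ℂ :=
  ((RatFunc.laurent β g : RatFunc ℂ) : LaurentSeries ℂ).coeff (-1)

section Aux
open Polynomial

noncomputable def res0 (f : RatFunc ℂ) : ℂ := ((f : LaurentSeries ℂ)).coeff (-1)

lemma coe_ratfunc_algebraMap (p : ℂ[X]) :
    ((algebraMap ℂ[X] (RatFunc ℂ) p : RatFunc ℂ) : LaurentSeries ℂ) =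
      HahnSeries.ofPowerSeries ℤ ℂ (p : PowerSeries ℂ) := by
  exact (RatFunc.coe_coe p).symm

lemma ofPS_ne_zero {x : PowerSeries ℂ} (hx : x ≠ 0) : HahnSeries.ofPowerSeries ℤ ℂ x ≠ 0 := by
  intro h
  exact hx (HahnSeries.ofPowerSeries_injective (h.trans (map_zero _).symm))

lemma res0_master (p q : ℂ[X]) (Q : PowerSeries ℂ) (hq : (q : PowerSeries ℂ) * Q = 1) (k : ℕ) :
    res0 (algebraMap ℂ[X] (RatFunc ℂ) p /
        algebraMap ℂ[X] (RatFunc ℂ) (Polynomial.X ^ k * q)) =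
      if k = 0 then 0 else PowerSeries.coeff (k - 1) ((p : PowerSeries ℂ) * Q) := by
  have hqne : q ≠ 0 := by
    rintro rfl; rw [Polynomial.coe_zero, zero_mul] at hq; exact one_ne_zero hq.symm
  have hcoe : ((algebraMap ℂ[X] (RatFunc ℂ) p /
        algebraMap ℂ[X] (RatFunc ℂ) (Polynomial.X ^ k * q) : RatFunc ℂ) : LaurentSeries ℂ) =
      HahnSeries.single (-(k : ℤ)) 1 * HahnSeries.ofPowerSeries ℤ ℂ ((p : PowerSeries ℂ) * Q) := by
    rw [map_div₀, coe_ratfunc_algebraMap, coe_ratfunc_algebraMap]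
    have hq' : (HahnSeries.ofPowerSeries ℤ ℂ (q : PowerSeries ℂ)) *
        (HahnSeries.ofPowerSeries ℤ ℂ Q) = 1 := by rw [← map_mul, hq, map_one]
    have hxk : (HahnSeries.single (1 : ℤ) (1 : ℂ)) ^ k *
        (HahnSeries.single (-(k : ℤ)) (1 : ℂ)) = 1 := by
      rw [← RatFunc.single_one_eq_pow, HahnSeries.single_mul_single, one_mul,
        add_neg_cancel, HahnSeries.single_zero_one]
    have hden : ((Polynomial.X ^ k * q : ℂ[X]) : PowerSeries ℂ) ≠ 0 := by
      rw [Ne, Polynomial.coe_eq_zero_iff]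
      exact mul_ne_zero (pow_ne_zero _ Polynomial.X_ne_zero) hqne
    rw [div_eq_iff (ofPS_ne_zero hden)]
    have hXk : ((Polynomial.X ^ k * q : ℂ[X]) : PowerSeries ℂ) =
        PowerSeries.X ^ k * (q : PowerSeries ℂ) := by push_cast; ring
    rw [hXk, map_mul, map_mul, map_pow, HahnSeries.ofPowerSeries_X]
    have : HahnSeries.single (-(k:ℤ)) (1:ℂ) *
          ((HahnSeries.ofPowerSeries ℤ ℂ) (p : PowerSeries ℂ) * (HahnSeries.ofPowerSeries ℤ ℂ) Q) *
          ((HahnSeries.single (1:ℤ) (1:ℂ)) ^ k * (HahnSeries.ofPowerSeries ℤ ℂ) (q : PowerSeries ℂ))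
        = (HahnSeries.ofPowerSeries ℤ ℂ) (p : PowerSeries ℂ) *
          (((HahnSeries.single (1:ℤ) (1:ℂ)) ^ k * HahnSeries.single (-(k:ℤ)) (1:ℂ)) *
          ((HahnSeries.ofPowerSeries ℤ ℂ) (q : PowerSeries ℂ) * (HahnSeries.ofPowerSeries ℤ ℂ) Q)) := by
      ring
    rw [this, hxk, hq', mul_one, mul_one]
  unfold res0
  rw [hcoe]
  rcases Nat.eq_zero_or_pos k with rfl | hk
  · simp only [Nat.cast_zero, neg_zero, HahnSeries.single_zero_one, one_mul]
    rw [PowerSeries.coeff_coe, if_pos (by norm_num)]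
    simp
  · rw [if_neg hk.ne']
    have h1 : (-1 : ℤ) = ((k - 1 : ℕ) : ℤ) + (-(k : ℤ)) := by omega
    rw [h1, HahnSeries.coeff_single_mul_add, one_mul, PowerSeries.coeff_coe,
      if_neg (by omega), Int.natAbs_natCast]

open PowerSeries in
lemma res0_deriv (a b : ℂ[X]) (hb : b ≠ 0) :
    res0 (algebraMap ℂ[X] (RatFunc ℂ) (derivative a * b - a * derivative b) /
      algebraMap ℂ[X] (RatFunc ℂ) (b ^ 2)) = 0 := by
  classical
  obtain ⟨c, hbc, hXc⟩ := b.exists_eq_pow_rootMultiplicity_mul_and_not_dvd hb 0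
  rw [Polynomial.C_0, sub_zero] at hbc hXc
  generalize hk : b.rootMultiplicity 0 = k at hbc
  have hc0 : c.coeff 0 ≠ 0 := by rwa [Polynomial.X_dvd_iff] at hXc
  have hcne : (c : PowerSeries ℂ) ≠ 0 := by
    rw [Ne, Polynomial.coe_eq_zero_iff]; rintro rfl; exact hc0 rfl
  set u : PowerSeries ℂ := (c : PowerSeries ℂ)⁻¹ with hu
  have hcu : (c : PowerSeries ℂ) * u = 1 := by
    apply PowerSeries.mul_inv_cancel
    simpa [Polynomial.constantCoeff_coe] using hc0
  have hb2 : (b ^ 2 : ℂ[X]) = Polynomial.X ^ (2 * k) * c ^ 2 := by rw [hbc]; ring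
  have hq2 : ((c ^ 2 : ℂ[X]) : PowerSeries ℂ) * u ^ 2 = 1 := by
    push_cast
    calc ((c : PowerSeries ℂ))^2 * u^2 = ((c : PowerSeries ℂ) * u)^2 := by ring
      _ = 1 := by rw [hcu]; simp
  rw [hb2, res0_master _ _ _ hq2]
  rcases Nat.eq_zero_or_pos k with hk0 | hkpos
  · rw [if_pos (by omega)]
  obtain ⟨e, rfl⟩ : ∃ e, k = e + 1 := ⟨k - 1, by omega⟩
  rw [if_neg (by omega)]
  -- polynomial identity
  set N : ℂ[X] := Polynomial.X * derivative a * c - Polynomial.C ((e : ℂ) + 1) * a * c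
      - Polynomial.X * a * derivative c with hN
  have hXnum : Polynomial.X * (derivative a * b - a * derivative b) = Polynomial.X ^ (e+1) * N := by
    rw [hbc, hN, derivative_mul, derivative_X_pow]
    push_cast
    ring
  -- power series side
  set F : PowerSeries ℂ := (a : PowerSeries ℂ) * u with hF
  have hdu : d⁄dX ℂ u = -u ^ 2 * (derivative c : PowerSeries ℂ) := by
    rw [hu, PowerSeries.derivative_inv', PowerSeries.derivative_coe]
  have hdF : d⁄dX ℂ F = (derivative a : PowerSeries ℂ) * u
      - (a : PowerSeries ℂ) * u ^ 2 * (derivative c : PowerSeries ℂ) := by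
    rw [hF, Derivation.leibniz, smul_eq_mul, smul_eq_mul, hdu, PowerSeries.derivative_coe]
    ring
  have key : ((N : ℂ[X]) : PowerSeries ℂ) * u ^ 2 =
      PowerSeries.X * d⁄dX ℂ F - PowerSeries.C ((e : ℂ) + 1) * F := by
    rw [hdF, hF, hN]
    push_cast
    linear_combination (PowerSeries.X * (derivative a : PowerSeries ℂ) * u
      - PowerSeries.C ((e : ℂ) + 1) * (a : PowerSeries ℂ) * u) * hcu
  -- coefficient computation
  have h1 : PowerSeries.coeff (2 * (e+1) - 1)
      (((derivative a * b - a * derivative b : ℂ[X]) : PowerSeries ℂ) * u ^ 2) =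
      PowerSeries.coeff (e+1) (((N : ℂ[X]) : PowerSeries ℂ) * u ^ 2) := by
    have h2 : (2 * (e+1) - 1 : ℕ) + 1 = (e+1) + (e+1) := by omega
    rw [← PowerSeries.coeff_succ_X_mul (2 * (e+1) - 1)
      (((derivative a * b - a * derivative b : ℂ[X]) : PowerSeries ℂ) * u ^ 2), h2]
    have h3 : PowerSeries.X * (((derivative a * b - a * derivative b : ℂ[X]) : PowerSeries ℂ) * u ^ 2)
        = PowerSeries.X ^ (e+1) * (((N : ℂ[X]) : PowerSeries ℂ) * u ^ 2) := by
      have := congrArg (fun p : ℂ[X] => ((p : PowerSeries ℂ) * u ^ 2)) hXnum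
      push_cast at this ⊢
      linear_combination this
    rw [h3, PowerSeries.coeff_X_pow_mul]
  rw [h1, key, map_sub]
  have h4 : PowerSeries.coeff (e+1) (PowerSeries.X * d⁄dX ℂ F) =
      PowerSeries.coeff (e+1) F * ((e : ℂ) + 1) := by
    rw [PowerSeries.coeff_succ_X_mul, PowerSeries.coeff_derivative]
  rw [h4, PowerSeries.coeff_C_mul]
  push_cast
  ring

lemma ratResidue_eq_res0 (g : RatFunc ℂ) (β : ℂ) :
    ((RatFunc.laurent β g : RatFunc ℂ) : LaurentSeries ℂ).coeff (-1) = res0 (RatFunc.laurent β g) := rfl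

lemma taylor_derivative (β : ℂ) (p : ℂ[X]) :
    derivative (Polynomial.taylor β p) = Polynomial.taylor β (derivative p) := by
  simp [Polynomial.taylor_apply, Polynomial.derivative_comp]

noncomputable def myRes (g : RatFunc ℂ) (β : ℂ) : ℂ :=
  ((RatFunc.laurent β g : RatFunc ℂ) : LaurentSeries ℂ).coeff (-1)

lemma myRes_eq (g : RatFunc ℂ) (β : ℂ) : myRes g β = res0 (RatFunc.laurent β g) := rfl

lemma myRes_deriv (a b : ℂ[X]) (hb : b ≠ 0) (β : ℂ) :
    myRes (algebraMap ℂ[X] (RatFunc ℂ) (derivative a * b - a * derivative b) /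
      algebraMap ℂ[X] (RatFunc ℂ) (b ^ 2)) β = 0 := by
  rw [myRes_eq, RatFunc.laurent_div]
  have h1 : Polynomial.taylor β (derivative a * b - a * derivative b) =
      derivative (Polynomial.taylor β a) * Polynomial.taylor β b -
        Polynomial.taylor β a * derivative (Polynomial.taylor β b) := by
    rw [map_sub, Polynomial.taylor_mul, Polynomial.taylor_mul, taylor_derivative,
      taylor_derivative]
  have h2 : Polynomial.taylor β (b ^ 2) = (Polynomial.taylor β b) ^ 2 := by
    rw [pow_two, pow_two, Polynomial.taylor_mul]
  rw [h1, h2]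
  apply res0_deriv
  intro h
  exact hb ((LinearMap.map_eq_zero_iff _ (Polynomial.taylor_injective β)).1 h)

lemma myRes_div_of_eval_ne (p q : ℂ[X]) (β : ℂ) (hq : q.eval β ≠ 0) :
    myRes (algebraMap ℂ[X] (RatFunc ℂ) p / algebraMap ℂ[X] (RatFunc ℂ) q) β = 0 := by
  rw [myRes_eq, RatFunc.laurent_div]
  have hQ : ((Polynomial.taylor β q : ℂ[X]) : PowerSeries ℂ) *
      ((Polynomial.taylor β q : ℂ[X]) : PowerSeries ℂ)⁻¹ = 1 := by
    apply PowerSeries.mul_inv_cancel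
    rw [Polynomial.constantCoeff_coe, Polynomial.taylor_coeff_zero]
    exact hq
  have := res0_master (Polynomial.taylor β p) (Polynomial.taylor β q) _ hQ 0
  rw [pow_zero, one_mul, if_pos rfl] at this
  exact this

lemma myRes_pow (r : ℂ[X]) (β : ℂ) (m : ℕ) (hm : m ≠ 0) :
    myRes (algebraMap ℂ[X] (RatFunc ℂ) r /
      algebraMap ℂ[X] (RatFunc ℂ) ((Polynomial.X - Polynomial.C β) ^ m)) β =
      (Polynomial.taylor β r).coeff (m - 1) := by
  rw [myRes_eq, RatFunc.laurent_div]
  have h2 : Polynomial.taylor β ((Polynomial.X - Polynomial.C β) ^ m) = Polynomial.X ^ m * 1 := by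
    rw [mul_one, Polynomial.taylor_apply, Polynomial.pow_comp, Polynomial.sub_comp,
      Polynomial.X_comp, Polynomial.C_comp]
    ring_nf
  rw [h2]
  have := res0_master (Polynomial.taylor β r) 1 1 (by simp) m
  rw [if_neg hm] at this
  rw [this, mul_one, Polynomial.coeff_coe]

lemma myRes_add (f g : RatFunc ℂ) (β : ℂ) : myRes (f + g) β = myRes f β + myRes g β := by
  rw [myRes, myRes, myRes, map_add, map_add]
  rfl

lemma myRes_zero (β : ℂ) : myRes 0 β = 0 := by
  rw [myRes, map_zero, map_zero]
  rfl

lemma myRes_sum {ι : Type*} (s : Finset ι) (f : ι → RatFunc ℂ) (β : ℂ) :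
    myRes (∑ i ∈ s, f i) β = ∑ i ∈ s, myRes (f i) β := by
  classical
  induction s using Finset.induction_on with
  | empty => simp [myRes_zero]
  | insert x t h ih => rw [Finset.sum_insert h, Finset.sum_insert h, myRes_add, ih]

def HRA (g : RatFunc ℂ) : Prop :=
  ∃ a b : Polynomial ℂ, b ≠ 0 ∧
    g = algebraMap (Polynomial ℂ) (RatFunc ℂ) (derivative a * b - a * derivative b) /
        algebraMap (Polynomial ℂ) (RatFunc ℂ) (b ^ 2)

lemma hra_zero : HRA 0 := by
  refine ⟨0, 1, one_ne_zero, ?_⟩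
  simp

lemma hra_add {f g : RatFunc ℂ} (hf : HRA f) (hg : HRA g) : HRA (f + g) := by
  obtain ⟨a₁, b₁, hb₁, rfl⟩ := hf
  obtain ⟨a₂, b₂, hb₂, rfl⟩ := hg
  refine ⟨a₁ * b₂ + a₂ * b₁, b₁ * b₂, mul_ne_zero hb₁ hb₂, ?_⟩
  have h₁ : (algebraMap ℂ[X] (RatFunc ℂ)) (b₁ ^ 2) ≠ 0 :=
    fun h => (pow_ne_zero 2 hb₁) (by simpa using h)
  have h₂ : (algebraMap ℂ[X] (RatFunc ℂ)) (b₂ ^ 2) ≠ 0 :=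
    fun h => (pow_ne_zero 2 hb₂) (by simpa using h)
  have h₃ : (algebraMap ℂ[X] (RatFunc ℂ)) ((b₁ * b₂) ^ 2) ≠ 0 :=
    fun h => (pow_ne_zero 2 (mul_ne_zero hb₁ hb₂)) (by simpa using h)
  rw [div_add_div _ _ h₁ h₂, div_eq_div_iff (mul_ne_zero h₁ h₂) h₃]
  simp only [← map_mul, ← map_add]
  refine congrArg _ ?_
  simp only [derivative_add, derivative_mul]
  ring

lemma hra_sum {ι : Type*} (s : Finset ι) (f : ι → RatFunc ℂ) (h : ∀ i ∈ s, HRA (f i)) :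
    HRA (∑ i ∈ s, f i) := by
  classical
  induction s using Finset.induction_on with
  | empty => simpa using hra_zero
  | insert x t hns ih =>
    rw [Finset.sum_insert hns]
    exact hra_add (h _ (Finset.mem_insert_self _ _))
      (ih fun i hi => h i (Finset.mem_insert_of_mem hi))

lemma hra_C_mul {f : RatFunc ℂ} (l : ℂ) (hf : HRA f) :
    HRA (algebraMap ℂ[X] (RatFunc ℂ) (Polynomial.C l) * f) := by
  obtain ⟨a, b, hb, rfl⟩ := hf
  refine ⟨Polynomial.C l * a, b, hb, ?_⟩
  rw [mul_div_assoc', ← map_mul]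
  congr 2
  simp only [derivative_mul, derivative_C]
  ring

lemma hra_poly (p : ℂ[X]) : HRA (algebraMap ℂ[X] (RatFunc ℂ) p) := by
  have h : ∃ P : ℂ[X], derivative P = p := by
    induction p using Polynomial.induction_on' with
    | add f g hf hg =>
      obtain ⟨P, rfl⟩ := hf
      obtain ⟨Q, rfl⟩ := hg
      exact ⟨P + Q, by rw [derivative_add]⟩
    | monomial n c =>
      refine ⟨Polynomial.C (c / (n + 1)) * Polynomial.X ^ (n + 1), ?_⟩
      rw [derivative_C_mul, derivative_X_pow]
      rw [← Polynomial.C_mul_X_pow_eq_monomial, Nat.add_sub_cancel, ← mul_assoc, ← Polynomial.C_mul]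
      congr 2
      push_cast
      exact div_mul_cancel₀ c (Nat.cast_add_one_ne_zero n)
  obtain ⟨P, hP⟩ := h
  refine ⟨P, 1, one_ne_zero, ?_⟩
  simp [hP]

lemma hra_pow_div (β : ℂ) (j m : ℕ) (h : j + 2 ≤ m) :
    HRA (algebraMap ℂ[X] (RatFunc ℂ) ((Polynomial.X - Polynomial.C β) ^ j) /
      algebraMap ℂ[X] (RatFunc ℂ) ((Polynomial.X - Polynomial.C β) ^ m)) := by
  set n : ℕ := m - j - 1 with hn
  have hn1 : 1 ≤ n := by omega
  have hXb : (Polynomial.X - Polynomial.C β : ℂ[X]) ≠ 0 := Polynomial.X_sub_C_ne_zero β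
  refine ⟨Polynomial.C (-(n : ℂ)⁻¹), (Polynomial.X - Polynomial.C β) ^ n,
    pow_ne_zero _ hXb, ?_⟩
  have hinj := IsFractionRing.injective ℂ[X] (RatFunc ℂ)
  have hne1 : (algebraMap ℂ[X] (RatFunc ℂ)) ((Polynomial.X - Polynomial.C β) ^ m) ≠ 0 :=
    fun hh => (pow_ne_zero m hXb) ((map_eq_zero_iff _ hinj).1 hh)
  have hne2 : (algebraMap ℂ[X] (RatFunc ℂ)) (((Polynomial.X - Polynomial.C β) ^ n) ^ 2) ≠ 0 :=
    fun hh => (pow_ne_zero 2 (pow_ne_zero n hXb)) ((map_eq_zero_iff _ hinj).1 hh)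
  rw [div_eq_div_iff hne1 hne2, ← map_mul, ← map_mul]
  congr 1
  rw [derivative_C, derivative_X_sub_C_pow]
  have hc : Polynomial.C (-(n : ℂ)⁻¹) * Polynomial.C ((n : ℂ)) = Polynomial.C (-1 : ℂ) := by
    rw [← Polynomial.C_mul]
    congr 1
    rw [neg_mul, inv_mul_cancel₀ (Nat.cast_ne_zero.2 (by omega) : (n : ℂ) ≠ 0)]
  calc (Polynomial.X - Polynomial.C β) ^ j * ((Polynomial.X - Polynomial.C β) ^ n) ^ 2
      = (Polynomial.X - Polynomial.C β) ^ (j + 2 * n) := by ring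
    _ = (0 * (Polynomial.X - Polynomial.C β) ^ n -
        Polynomial.C (-(n : ℂ)⁻¹) * (Polynomial.C ((n : ℂ)) *
          (Polynomial.X - Polynomial.C β) ^ (n - 1))) *
        (Polynomial.X - Polynomial.C β) ^ m := by
      rw [zero_mul, zero_sub, ← mul_assoc, hc]
      have : j + 2 * n = (n - 1) + m := by omega
      rw [this]
      simp [Polynomial.C_neg, pow_add]

lemma hra_term (i : ℂ) (m : ℕ) (hm : m ≠ 0) (r : ℂ[X])
    (hdeg : r.degree < ((Polynomial.X - Polynomial.C i) ^ m).degree)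
    (hres : (Polynomial.taylor i r).coeff (m - 1) = 0) :
    HRA (algebraMap ℂ[X] (RatFunc ℂ) r /
      algebraMap ℂ[X] (RatFunc ℂ) ((Polynomial.X - Polynomial.C i) ^ m)) := by
  rcases eq_or_ne r 0 with rfl | hr
  · rw [map_zero, zero_div]; exact hra_zero
  have hdm : ((Polynomial.X - Polynomial.C i) ^ m).degree = (m : WithBot ℕ) := by
    rw [Polynomial.degree_pow, Polynomial.degree_X_sub_C]; simp
  have hnd : (Polynomial.taylor i r).natDegree < m := by
    rw [Polynomial.natDegree_taylor]
    exact Polynomial.natDegree_lt_iff_degree_lt hr |>.2 (by rwa [hdm] at hdeg)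
  have hexp : r = ∑ j ∈ Finset.range m,
      Polynomial.C ((Polynomial.taylor i r).coeff j) * (Polynomial.X - Polynomial.C i) ^ j := by
    conv_lhs => rw [← Polynomial.sum_taylor_eq r i]
    exact Polynomial.sum_over_range' _ (by simp) m hnd
  have hsplit : algebraMap ℂ[X] (RatFunc ℂ) r /
      algebraMap ℂ[X] (RatFunc ℂ) ((Polynomial.X - Polynomial.C i) ^ m) =
      ∑ j ∈ Finset.range m, algebraMap ℂ[X] (RatFunc ℂ)
        (Polynomial.C ((Polynomial.taylor i r).coeff j)) *
        (algebraMap ℂ[X] (RatFunc ℂ) ((Polynomial.X - Polynomial.C i) ^ j) /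
         algebraMap ℂ[X] (RatFunc ℂ) ((Polynomial.X - Polynomial.C i) ^ m)) := by
    conv_lhs => rw [hexp]
    rw [map_sum, Finset.sum_div]
    refine Finset.sum_congr rfl fun j _ => ?_
    rw [map_mul, mul_div_assoc]
  rw [hsplit]
  apply hra_sum
  intro j hj
  rcases eq_or_ne j (m - 1) with rfl | hjm
  · rw [hres, map_zero, map_zero, zero_mul]
    exact hra_zero
  · exact hra_C_mul _ (hra_pow_div i j m (by simp at hj; omega))

theorem main_thm (g : RatFunc ℂ) : HRA g ↔ ∀ β : ℂ, myRes g β = 0 := by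
  constructor
  · rintro ⟨a, b, hb, rfl⟩ β
    exact myRes_deriv a b hb β
  · intro hres
    classical
    set q := g.denom with hqdef
    have hqm : q.Monic := g.monic_denom
    have hq0 : q ≠ 0 := hqm.ne_zero
    have hg : g = algebraMap ℂ[X] (RatFunc ℂ) g.num / algebraMap ℂ[X] (RatFunc ℂ) q :=
      (RatFunc.num_div_denom g).symm
    set s := q.roots.toFinset with hsdef
    set G : ℂ → ℂ[X] := fun i => (Polynomial.X - Polynomial.C i) ^ (q.rootMultiplicity i)
      with hGdef
    have hprod : ∏ i ∈ s, G i = q := by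
      conv_rhs => rw [(IsAlgClosed.splits q).eq_prod_roots_of_monic hqm]
      rw [Finset.prod_multiset_map_count]
      exact Finset.prod_congr rfl fun i _ => by rw [hGdef, Polynomial.count_roots]
    have hmonic : ∀ i ∈ s, (G i).Monic := fun i _ => (Polynomial.monic_X_sub_C i).pow _
    have hcop : (↑s : Set ℂ).Pairwise fun i j => IsCoprime (G i) (G j) := by
      intro i _ j _ hij
      exact (Polynomial.pairwise_coprime_X_sub_C Function.injective_id hij).pow
    obtain ⟨quo, r, hdeg, hsum⟩ := div_eq_quo_add_sum_rem_div (R := ℂ) (K := RatFunc ℂ) g.num hmonic hcop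
    rw [← map_prod, hprod] at hsum
    rw [← hg] at hsum
    -- residues pick out coefficients
    have hcoeff : ∀ i ∈ s, (Polynomial.taylor i (r i)).coeff (q.rootMultiplicity i - 1) = 0 := by
      intro i hi
      have hmult : q.rootMultiplicity i ≠ 0 := by
        have : q.IsRoot i := Polynomial.isRoot_of_mem_roots (Multiset.mem_toFinset.1 hi)
        exact (Polynomial.rootMultiplicity_pos hq0 |>.2 this).ne'
      have h1 : myRes g i = (Polynomial.taylor i (r i)).coeff (q.rootMultiplicity i - 1) := by
        rw [hsum, myRes_add, myRes_sum]
        have hquo : myRes (algebraMap ℂ[X] (RatFunc ℂ) quo) i = 0 := by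
          have := myRes_div_of_eval_ne quo 1 i (by simp)
          rwa [map_one, div_one] at this
        rw [hquo, zero_add]
        rw [Finset.sum_eq_single_of_mem i hi]
        · exact myRes_pow (r i) i _ hmult
        · intro j _ hji
          apply myRes_div_of_eval_ne
          rw [hGdef]
          simp only [Polynomial.eval_pow, Polynomial.eval_sub, Polynomial.eval_X,
            Polynomial.eval_C]
          exact pow_ne_zero _ (sub_ne_zero.2 hji.symm)
      rw [← h1]
      exact hres i
    rw [hsum]
    apply hra_add (hra_poly quo)
    apply hra_sum
    intro i hi
    have hmult : q.rootMultiplicity i ≠ 0 := by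
      have : q.IsRoot i := Polynomial.isRoot_of_mem_roots (Multiset.mem_toFinset.1 hi)
      exact (Polynomial.rootMultiplicity_pos hq0 |>.2 this).ne'
    exact hra_term i _ hmult (r i) (hdeg i hi) (hcoeff i hi)

end Aux

/-- A rational function `g ∈ ℂ(t)` has a rational antiderivative if and only if
for every `β ∈ ℂ` the residue of `g` at `β` is zero. -/
theorem hasRatAntideriv_iff_residues_eq_zero (g : RatFunc ℂ) :
    HasRatAntideriv g ↔ ∀ β : ℂ, ratResidue g β = 0 := main_thm g
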